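/- arXiv:2004.05465 — 4 statements merged into one kernel-verified Lean document; each statement's English description precedes it below -/
import Mathlib

section
/- Let d ≥ 1, w, x ∈ ℝ^{d+1} and y ∈ {−1, +1}. Suppose w ∗ w ≤ −1, x ∗ x = 1, and y·(x ∗ w) < 0 (i.e., x is misclassified by w). Then the hyperbolic perceptron update v = w + y·x satisfies v ∗ v < 0, and the normalized iterate u = v / min{1, √(−v ∗ v)} satisfies u ∗ u ≤ −1. In particular every iterate of the hyperbolic perceptron defines a valid decision hyperplane intersecting L^d. -/
/-- The Minkowski product on ℝ^{d+1}: `x ∗ y = x₀ y₀ − ∑_{i=1}^d xᵢ yᵢ`. -/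
noncomputable def mink {d : ℕ} (x y : Fin (d + 1) → ℝ) : ℝ :=
  x 0 * y 0 - ∑ i : Fin d, x i.succ * y i.succ

lemma mink_expand {d : ℕ} (w x : Fin (d+1) → ℝ) (y : ℝ) :
    mink (w + y • x) (w + y • x) = mink w w + 2*y*mink x w + y^2 * mink x x := by
  simp only [mink, Pi.add_apply, Pi.smul_apply, smul_eq_mul]
  have h : ∀ i : Fin d, (w i.succ + y * x i.succ) * (w i.succ + y * x i.succ)
      = w i.succ * w i.succ + 2*y*(x i.succ * w i.succ) + y^2 * (x i.succ * x i.succ) :=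
    fun i => by ring
  simp_rw [h, Finset.sum_add_distrib, ← Finset.mul_sum]
  ring

lemma mink_smul {d : ℕ} (c : ℝ) (v : Fin (d+1) → ℝ) :
    mink (c • v) (c • v) = c^2 * mink v v := by
  simp only [mink, Pi.smul_apply, smul_eq_mul]
  have h : ∀ i : Fin d, (c * v i.succ) * (c * v i.succ) = c^2 * (v i.succ * v i.succ) :=
    fun i => by ring
  simp_rw [h, ← Finset.mul_sum]
  ring

/-- validity of the hyperbolic perceptron update. If `w ∗ w ≤ −1`,
`x ∗ x = 1` and `x` is misclassified by `w` (`y·(x ∗ w) < 0`), then the update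
`v = w + y·x` satisfies `v ∗ v < 0`, and the normalized iterate
`u = v / min{1, √(−v ∗ v)}` satisfies `u ∗ u ≤ −1`. -/
theorem hyperbolic_perceptron_update_valid {d : ℕ} (hd : 1 ≤ d)
    (w x : Fin (d + 1) → ℝ) (y : ℝ) (hy : y = 1 ∨ y = -1)
    (hw : mink w w ≤ -1) (hx : mink x x = 1) (hmis : y * mink x w < 0) :
    mink (w + y • x) (w + y • x) < 0 ∧
    mink ((min 1 (Real.sqrt (-(mink (w + y • x) (w + y • x)))))⁻¹ • (w + y • x))
         ((min 1 (Real.sqrt (-(mink (w + y • x) (w + y • x)))))⁻¹ • (w + y • x)) ≤ -1 := by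
  have hy2 : y^2 = 1 := by rcases hy with h | h <;> simp [h]
  have hS : mink (w + y • x) (w + y • x) = mink w w + 2*(y*mink x w) + 1 := by
    rw [mink_expand, hx, hy2]; ring
  set S := mink (w + y • x) (w + y • x) with hSdef
  have hSneg : S < 0 := by rw [hS]; nlinarith
  refine ⟨hSneg, ?_⟩
  rw [mink_smul, ← hSdef]
  have hsqrt_pos : 0 < Real.sqrt (-S) := Real.sqrt_pos.mpr (by linarith)
  rcases le_total (Real.sqrt (-S)) 1 with h1 | h1
  · rw [min_eq_right h1]
    have h2 : (Real.sqrt (-S))^2 = -S := Real.sq_sqrt (by linarith)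
    rw [inv_pow, h2]
    rw [show (-S)⁻¹ * S = -1 by rw [inv_mul_eq_div, div_neg, div_self hSneg.ne]]
  · rw [min_eq_left h1]
    have : (1:ℝ) ≤ -S := by nlinarith [Real.sq_sqrt (show (0:ℝ) ≤ -S by linarith)]
    simp; linarith
end

section
/- (Exponential lower bound for plain gradient descent, Theorem 2.) Let R ≥ 1 and f(s) = ln(1 + exp(−arsinh(s/(2R)))) be the hyperbolic logistic loss function. Define the real recursion a₀ = 0, a_{t+1} = a_t − f′(a_t). Then 0 ≤ a_t ≤ t for every t ∈ ℕ. Consequently, for the training set S = {((1,0,…,0), +1), ((−1,0,…,0), −1)} ⊂ ℝ^{d+1} × {±1} and the gradient-descent-with-normalization iterates w_t = (a_t, √(a_t² + 1), 0, …, 0) initialized at w₀ = e₂, the hyperbolic margin of w_t on S equals arsinh(a_t) ≤ arsinh(t), so reaching margin at least γ_H > 0 requires t ≥ sinh(γ_H), i.e., a number of iterations that is Ω(exp(γ_H)). -/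
lemma hyp_loss_hasDerivAt (R : ℝ) (s : ℝ) :
    HasDerivAt (fun s => Real.log (1 + Real.exp (-Real.arsinh (s / (2 * R)))))
      (Real.exp (-Real.arsinh (s / (2 * R))) *
          -((Real.sqrt (1 + (s / (2 * R)) ^ 2))⁻¹ * (1 / (2 * R))) /
        (1 + Real.exp (-Real.arsinh (s / (2 * R))))) s := by
  have h1 : HasDerivAt (fun s : ℝ => s / (2 * R)) (1 / (2 * R)) s := by
    simpa using (hasDerivAt_id s).div_const (2 * R)
  have h2 := h1.arsinh
  have h3 := h2.neg
  have h4 := h3.exp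
  have h5 := h4.const_add 1
  have hpos : 1 + Real.exp (-Real.arsinh (s / (2 * R))) ≠ 0 := by
    positivity
  have h6 := h5.log hpos
  simpa using h6

lemma deriv_bounds (R : ℝ) (hR : 1 ≤ R)
    (f : ℝ → ℝ) (hf : ∀ s, f s = Real.log (1 + Real.exp (-Real.arsinh (s / (2 * R)))))
    (s : ℝ) : -1 ≤ deriv f s ∧ deriv f s ≤ 0 := by
  have hfe : f = fun s => Real.log (1 + Real.exp (-Real.arsinh (s / (2 * R)))) :=
    funext hf
  have hd := (hyp_loss_hasDerivAt R s).deriv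
  rw [← hfe] at hd
  rw [hd]
  set E := Real.exp (-Real.arsinh (s / (2 * R))) with hE
  set G := (Real.sqrt (1 + (s / (2 * R)) ^ 2))⁻¹ * (1 / (2 * R)) with hG
  have hEpos : 0 < E := Real.exp_pos _
  have hR0 : (0 : ℝ) < 2 * R := by linarith
  have hsq : 1 ≤ Real.sqrt (1 + (s / (2 * R)) ^ 2) := by
    have h := Real.sqrt_le_sqrt (show (1:ℝ) ≤ 1 + (s / (2 * R)) ^ 2 by
      nlinarith [sq_nonneg (s / (2 * R))])
    simpa using h
  have hGpos : 0 < G := by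
    apply mul_pos (inv_pos.mpr (by linarith)) (by positivity)
  have hG1 : G ≤ 1 := by
    have h1 : (Real.sqrt (1 + (s / (2 * R)) ^ 2))⁻¹ ≤ 1 := by
      rw [inv_le_one_iff₀]; right; exact hsq
    have h2 : 1 / (2 * R) ≤ 1 := by
      rw [div_le_one hR0]; linarith
    calc G ≤ 1 * 1 := by
            apply mul_le_mul h1 h2 (by positivity) (by norm_num)
      _ = 1 := by ring
  constructor
  · rw [le_div_iff₀ (show (0:ℝ) < 1 + E by positivity)]
    nlinarith
  · apply div_nonpos_of_nonpos_of_nonneg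
    · nlinarith
    · positivity

/-- Theorem 2: exponential lower bound for plain gradient descent.
For the hyperbolic logistic loss `f(s) = ln(1 + exp(−arsinh(s/(2R))))` with `R ≥ 1`
and the recursion `a₀ = 0`, `a_{t+1} = aₜ − f′(aₜ)`, one has `0 ≤ aₜ ≤ t` for all `t`.
Consequently, for `S = {((1,0,…,0), +1), ((−1,0,…,0), −1)}` and the normalized GD
iterates `wₜ = (aₜ, √(aₜ² + 1), 0, …, 0)`, the hyperbolic margin of `wₜ` on each
point of `S` equals `arsinh aₜ ≤ arsinh t`, so achieving margin `γ > 0` forces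
`sinh γ ≤ t`, i.e. `t = Ω(exp γ)`. -/
theorem gradient_descent_exponential_lower_bound {d : ℕ} (hd : 1 ≤ d)
    (R : ℝ) (hR : 1 ≤ R)
    (f : ℝ → ℝ) (hf : ∀ s, f s = Real.log (1 + Real.exp (-Real.arsinh (s / (2 * R)))))
    (a : ℕ → ℝ) (ha0 : a 0 = 0) (ha : ∀ t, a (t + 1) = a t - deriv f (a t)) :
    (∀ t : ℕ, 0 ≤ a t ∧ a t ≤ (t : ℝ)) ∧
    (∀ t : ℕ,
      let w : Fin (d + 1) → ℝ :=
        fun i => if i = 0 then a t else if i = 1 then Real.sqrt ((a t) ^ 2 + 1) else 0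
      let x1 : Fin (d + 1) → ℝ := fun i => if i = 0 then 1 else 0
      Real.arsinh ((1 : ℝ) * mink w x1 / Real.sqrt (-(mink w w))) = Real.arsinh (a t) ∧
      Real.arsinh ((-1 : ℝ) * mink w (-x1) / Real.sqrt (-(mink w w))) = Real.arsinh (a t) ∧
      Real.arsinh (a t) ≤ Real.arsinh (t : ℝ) ∧
      (∀ γ : ℝ, 0 < γ → γ ≤ Real.arsinh (a t) → Real.sinh γ ≤ (t : ℝ))) := by
  have key : ∀ t : ℕ, 0 ≤ a t ∧ a t ≤ (t : ℝ) := by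
    intro t
    induction t with
    | zero => simp [ha0]
    | succ n ih =>
      obtain ⟨h1, h2⟩ := ih
      obtain ⟨hb1, hb2⟩ := deriv_bounds R hR f hf (a n)
      rw [ha n]
      push_cast
      constructor <;> linarith
  refine ⟨key, fun t => ?_⟩
  intro w x1
  obtain ⟨h1, h2⟩ := key t
  have hv1 : (1 : Fin (d + 1)).val = 1 := by
    have h : (1 : Fin (d + 1)).val = 1 % (d + 1) := rfl
    rw [h, Nat.mod_eq_of_lt (by omega)]
  have hone : (1 : Fin (d + 1)) ≠ 0 := by
    intro h
    have := congrArg Fin.val h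
    rw [hv1] at this
    simp at this
  have hw0 : w 0 = a t := by simp [w]
  have hw1 : w 1 = Real.sqrt ((a t) ^ 2 + 1) := by simp [w, hone]
  have hx10 : x1 0 = 1 := by simp [x1]
  have hx1succ : ∀ i : Fin d, x1 i.succ = 0 := by
    intro i; simp [x1, Fin.succ_ne_zero]
  have hmwx : mink w x1 = a t := by
    have hsum0 : ∑ i : Fin d, w i.succ * x1 i.succ = 0 :=
      Finset.sum_eq_zero fun i _ => by rw [hx1succ i, mul_zero]
    unfold mink
    rw [hsum0, hw0, hx10]
    ring
  have hzero : (⟨0, hd⟩ : Fin d).succ = (1 : Fin (d + 1)) := by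
    ext
    rw [Fin.val_succ, hv1]
  have hwsucc : ∀ i : Fin d, w i.succ * w i.succ =
      if i = (⟨0, hd⟩ : Fin d) then (a t) ^ 2 + 1 else 0 := by
    intro i
    have hns : (i.succ : Fin (d + 1)) ≠ 0 := Fin.succ_ne_zero i
    by_cases hi : i = (⟨0, hd⟩ : Fin d)
    · subst hi
      rw [hzero, hw1, if_pos rfl]
      exact Real.mul_self_sqrt (by positivity)
    · have hns1 : (i.succ : Fin (d + 1)) ≠ 1 := by
        intro h
        apply hi
        have hv := congrArg Fin.val h
        rw [Fin.val_succ, hv1] at hv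
        ext
        simpa using hv
      have : w i.succ = 0 := by simp [w, hns, hns1]
      rw [this, if_neg hi]
      ring
  have hmww : mink w w = -1 := by
    have hsum : ∑ i : Fin d, w i.succ * w i.succ = (a t) ^ 2 + 1 := by
      rw [Finset.sum_congr rfl (fun i _ => hwsucc i)]
      simp
    unfold mink
    rw [hsum, hw0]
    ring
  have hsqrt : Real.sqrt (-(mink w w)) = 1 := by rw [hmww]; simp
  have hmwnx : mink w (-x1) = -(a t) := by
    have hsum0 : ∑ i : Fin d, w i.succ * (-x1) i.succ = 0 :=
      Finset.sum_eq_zero fun i _ => by simp [hx1succ i]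
    unfold mink
    rw [hsum0]
    simp [hw0, hx10]
  refine ⟨by rw [hmwx, hsqrt]; simp, by rw [hmwnx, hsqrt]; norm_num, ?_, ?_⟩
  · exact Real.arsinh_le_arsinh.mpr h2
  · intro γ _ hγ
    have := Real.sinh_le_sinh.mpr hγ
    rw [Real.sinh_arsinh] at this
    linarith
end

section
/- (Closed form of the certification problem CERT, Theorem 3.) Let d ≥ 2, let x̌, w̌ ∈ ℝ^d be unit vectors, write ξ = ⟨w̌, x̌⟩ and ζ = √(1 − ξ²), and let x̌⊥ be a unit vector orthogonal to x̌ such that w̌ = ξ·x̌ + ζ·x̌⊥. Let b ∈ [−1, 1] with ξ ≥ b. Then z* = b·x̌ + √(1 − b²)·x̌⊥ satisfies ‖z*‖ = 1 and ⟨x̌, z*⟩ = b, and for every z ∈ ℝ^d with ‖z‖ = 1 and ⟨x̌, z⟩ ≤ b one has ⟨w̌, z⟩ ≤ ⟨w̌, z*⟩ = ξ·b + ζ·√(1 − b²). That is, z* maximizes the linear objective ⟨w̌, ·⟩ over the spherical cap {z : ‖z‖ = 1, ⟨x̌, z⟩ ≤ b}. -/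
open scoped RealInnerProductSpace

open Real

lemma key_ineq_cert (ξ t b : ℝ) (hξ1 : ξ ≤ 1) (ht : -1 ≤ t)
    (htb : t ≤ b) (hbξ : b ≤ ξ) :
    ξ*t + Real.sqrt (1-ξ^2) * Real.sqrt (1-t^2)
      ≤ ξ*b + Real.sqrt (1-ξ^2) * Real.sqrt (1-b^2) := by
  have hb1 : b ≤ 1 := le_trans hbξ hξ1
  have hξm : -1 ≤ ξ := le_trans (le_trans ht htb) hbξ
  have hbm : -1 ≤ b := le_trans ht htb
  have ht1 : t ≤ 1 := le_trans htb hb1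
  have e1 : ξ*t + Real.sqrt (1-ξ^2) * Real.sqrt (1-t^2)
      = Real.cos (arccos t - arccos ξ) := by
    rw [Real.cos_sub, Real.cos_arccos ht ht1, Real.cos_arccos hξm hξ1,
      Real.sin_arccos, Real.sin_arccos]; ring
  have e2 : ξ*b + Real.sqrt (1-ξ^2) * Real.sqrt (1-b^2)
      = Real.cos (arccos b - arccos ξ) := by
    rw [Real.cos_sub, Real.cos_arccos hbm hb1, Real.cos_arccos hξm hξ1,
      Real.sin_arccos, Real.sin_arccos]; ring
  rw [e1, e2]
  apply Real.cos_le_cos_of_nonneg_of_le_pi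
  · simp only [Real.arccos, sub_sub_sub_cancel_left]
    linarith [Real.monotone_arcsin hbξ]
  · linarith [Real.arccos_le_pi t, Real.arccos_nonneg ξ]
  · simp only [Real.arccos, sub_sub_sub_cancel_left]
    linarith [Real.monotone_arcsin htb]

/-- Theorem 3: closed form of the certification problem CERT.
Let `x̌, w̌ ∈ ℝ^d` be unit vectors with `ξ = ⟨w̌, x̌⟩`, `ζ = √(1 − ξ²)`, and let
`x̌⊥` be a unit vector orthogonal to `x̌` with `w̌ = ξ·x̌ + ζ·x̌⊥`. For `b ∈ [−1,1]`
with `ξ ≥ b`, the point `z* = b·x̌ + √(1 − b²)·x̌⊥` has unit norm, satisfies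
`⟨x̌, z*⟩ = b`, and maximizes `⟨w̌, ·⟩` over the spherical cap
`{z : ‖z‖ = 1, ⟨x̌, z⟩ ≤ b}`, with optimal value `ξ·b + ζ·√(1 − b²)`. -/
theorem cert_closed_form {d : ℕ} (hd : 2 ≤ d)
    (xc wc xperp : EuclideanSpace ℝ (Fin d))
    (hxc : ‖xc‖ = 1) (hwc : ‖wc‖ = 1) (hxperp : ‖xperp‖ = 1)
    (horth : ⟪xc, xperp⟫ = 0)
    (ξ ζ : ℝ) (hξ : ξ = ⟪wc, xc⟫) (hζ : ζ = Real.sqrt (1 - ξ ^ 2))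
    (hdecomp : wc = ξ • xc + ζ • xperp)
    (b : ℝ) (hb : b ∈ Set.Icc (-1 : ℝ) 1) (hξb : b ≤ ξ) :
    ‖b • xc + Real.sqrt (1 - b ^ 2) • xperp‖ = 1 ∧
    ⟪xc, b • xc + Real.sqrt (1 - b ^ 2) • xperp⟫ = b ∧
    ⟪wc, b • xc + Real.sqrt (1 - b ^ 2) • xperp⟫ = ξ * b + ζ * Real.sqrt (1 - b ^ 2) ∧
    ∀ z : EuclideanSpace ℝ (Fin d), ‖z‖ = 1 → ⟪xc, z⟫ ≤ b →
      ⟪wc, z⟫ ≤ ⟪wc, b • xc + Real.sqrt (1 - b ^ 2) • xperp⟫ := by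
  obtain ⟨hbm, hb1⟩ := hb
  have hxx : ⟪xc, xc⟫ = 1 := by
    rw [real_inner_self_eq_norm_sq, hxc]; norm_num
  have hpp : ⟪xperp, xperp⟫ = 1 := by
    rw [real_inner_self_eq_norm_sq, hxperp]; norm_num
  have horth' : ⟪xperp, xc⟫ = 0 := by rw [real_inner_comm]; exact horth
  obtain ⟨s, hs, hs0, hs2⟩ : ∃ s : ℝ, Real.sqrt (1 - b ^ 2) = s ∧ 0 ≤ s ∧ s ^ 2 = 1 - b ^ 2 :=
    ⟨_, rfl, Real.sqrt_nonneg _, Real.sq_sqrt (by nlinarith)⟩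
  rw [hs]
  -- inner products with z*
  have hxz : ⟪xc, b • xc + s • xperp⟫ = b := by
    simp only [inner_add_right, real_inner_smul_right, hxx, horth]; ring
  have hpz : ⟪xperp, b • xc + s • xperp⟫ = s := by
    simp only [inner_add_right, real_inner_smul_right, hpp, horth']; ring
  have hξ1 : ξ ≤ 1 := by
    rw [hξ]
    calc ⟪wc, xc⟫ ≤ ‖wc‖ * ‖xc‖ := real_inner_le_norm _ _
    _ = 1 := by rw [hwc, hxc]; norm_num
  have hξm : -1 ≤ ξ := le_trans hbm hξb
  have hζ2 : ζ ^ 2 = 1 - ξ ^ 2 := by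
    rw [hζ, Real.sq_sqrt]; nlinarith
  -- norm of z*
  have hnorm : ‖b • xc + s • xperp‖ = 1 := by
    have : ⟪b • xc + s • xperp, b • xc + s • xperp⟫ = 1 := by
      simp only [inner_add_left, inner_add_right, real_inner_smul_left,
        real_inner_smul_right, hxx, hpp, horth, horth']
      nlinarith
    have h2 := (real_inner_self_eq_norm_sq (b • xc + s • xperp)).symm.trans this
    rw [← Real.sqrt_sq (norm_nonneg (b • xc + s • xperp)), h2, Real.sqrt_one]
  have hwz : ⟪wc, b • xc + s • xperp⟫ = ξ * b + ζ * s := by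
    rw [hdecomp]
    simp only [inner_add_left, real_inner_smul_left, hxz, hpz]
  refine ⟨hnorm, hxz, hwz, ?_⟩
  intro z hz hzb
  obtain ⟨t, htdef⟩ : ∃ t : ℝ, ⟪xc, z⟫ = t := ⟨_, rfl⟩
  obtain ⟨u, hudef⟩ : ∃ u : ℝ, ⟪xperp, z⟫ = u := ⟨_, rfl⟩
  rw [htdef] at hzb
  have hc1 : ⟪z, xc⟫ = t := by rw [real_inner_comm]; exact htdef
  have hc2 : ⟪z, xperp⟫ = u := by rw [real_inner_comm]; exact hudef
  have hwz' : ⟪wc, z⟫ = ξ * t + ζ * u := by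
    rw [hdecomp]; simp only [inner_add_left, real_inner_smul_left, htdef, hudef]
  -- Bessel: t^2 + u^2 ≤ 1
  have hbessel : t ^ 2 + u ^ 2 ≤ 1 := by
    have h0 : (0:ℝ) ≤ ⟪z - t • xc - u • xperp, z - t • xc - u • xperp⟫ :=
      real_inner_self_nonneg
    have hzz : ⟪z, z⟫ = 1 := by
      rw [real_inner_self_eq_norm_sq, hz]; norm_num
    simp only [inner_sub_left, inner_sub_right, real_inner_smul_left,
      real_inner_smul_right, hxx, hpp, horth, horth', hzz,
      htdef, hudef, hc1, hc2] at h0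
    ring_nf at h0 ⊢
    linarith [h0]
  have ht1 : -1 ≤ t := by
    linarith [hbessel, sq_nonneg u, sq_nonneg (t+1)]
  have hu : u ≤ Real.sqrt (1 - t ^ 2) := by
    have : u ≤ Real.sqrt (u ^ 2) := by
      rw [Real.sqrt_sq_eq_abs]; exact le_abs_self u
    refine le_trans this (Real.sqrt_le_sqrt (by linarith))
  have hζ0 : 0 ≤ ζ := by rw [hζ]; exact Real.sqrt_nonneg _
  have key := key_ineq_cert ξ t b hξ1 ht1 hzb hξb
  rw [hwz, hwz']
  have h1 : ζ * u ≤ ζ * Real.sqrt (1 - t ^ 2) := mul_le_mul_of_nonneg_left hu hζ0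
  calc ξ * t + ζ * u ≤ ξ * t + ζ * Real.sqrt (1 - t ^ 2) := by linarith
    _ ≤ ξ * b + ζ * s := by rw [hζ, ← hs]; exact key
end

section
/- (Spherical-code construction for the ERM lower bound, Lemma C.5.) Let d ≥ 1, 0 < ε < α, ε′ = sinh(ε), δ = √(cosh²(α) − 1), ρ ∈ (0, 1), and let v₁, …, v_T ∈ ℝ^d be unit vectors with ⟨v_i, v_j⟩ ≤ ρ·ε′·√(1 + δ²)/(δ·√(1 + ε′²)) for all i ≠ j. Set x₁ = (1, 0, …, 0) ∈ ℝ^{d+1}, x₂ = −x₁, w_t = (ε′, √(1 + ε′²)·v_t), x̃_{1,t} = (√(1 + δ²), δ·v_t), and x̃_{2,t} = −x̃_{1,t}. Then for every t ∈ {1, …, T}: (i) w_t ∗ w_t = −1; (ii) w_t ∗ x₁ = ε′ and w_t ∗ x₂ = −ε′, so w_t separates S = {(x₁, +1), (x₂, −1)} with hyperbolic margin exactly ε; (iii) x̃_{1,t} ∗ x̃_{1,t} = x̃_{2,t} ∗ x̃_{2,t} = 1 and x₁ ∗ x̃_{1,t} = x₂ ∗ x̃_{2,t} = cosh(α), so the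 adversarial perturbations have hyperbolic magnitude exactly α; (iv) w_t ∗ x̃_{1,t} < 0 and w_t ∗ x̃_{2,t} > 0, i.e., w_t misclassifies its own adversarial examples; (v) for every i ≠ t, w_t ∗ x̃_{1,i} > 0 and w_t ∗ x̃_{2,i} < 0, i.e., w_t correctly classifies all other adversarial examples. Hence there is an admissible run of adversarial training with ERM updates of length T in which every iterate has margin only ε on S. -/
open scoped RealInnerProductSpace

private lemma mink_cons {d : ℕ} (a b : ℝ) (f g : Fin d → ℝ) :
    mink (Fin.cons a f) (Fin.cons b g) = a * b - ∑ i, f i * g i := by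
  simp [mink]

private lemma mink_neg_right {d : ℕ} (x y : Fin (d+1) → ℝ) : mink x (-y) = - mink x y := by
  simp [mink, mul_neg, Finset.sum_neg_distrib]; ring

private lemma mink_neg_left {d : ℕ} (x y : Fin (d+1) → ℝ) : mink (-x) y = - mink x y := by
  simp [mink, neg_mul, Finset.sum_neg_distrib]; ring

/-- Lemma C.5, spherical-code construction for the ERM lower bound.
Given `0 < ε < α`, `ε′ = sinh ε`, `δ = √(cosh²α − 1)`, `ρ ∈ (0,1)`, and a spherical
code `v₁, …, v_T` of unit vectors in ℝ^d with pairwise inner products at most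
`ρ·ε′·√(1+δ²)/(δ·√(1+ε′²))`, the classifiers `w_t = (ε′, √(1+ε′²)·v_t)` and the
adversarial points `x̃_{1,t} = (√(1+δ²), δ·v_t)`, `x̃_{2,t} = −x̃_{1,t}` satisfy:
(i) `w_t ∗ w_t = −1`; (ii) `w_t ∗ x₁ = ε′`, `w_t ∗ x₂ = −ε′`, so `w_t` separates
`S = {(x₁,+1),(x₂,−1)}` with hyperbolic margin exactly `ε`; (iii) the adversarial
points lie on `L^d` at hyperbolic distance exactly `α` from `x₁`, `x₂`;
(iv) `w_t` misclassifies its own adversarial examples; (v) `w_t` correctly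
classifies all other adversarial examples. -/
theorem spherical_code_erm_lower_bound {d : ℕ} (hd : 1 ≤ d)
    (ε α ρ : ℝ) (hε : 0 < ε) (hεα : ε < α) (hρ : ρ ∈ Set.Ioo (0 : ℝ) 1)
    (T : ℕ) (v : Fin T → EuclideanSpace ℝ (Fin d))
    (hv : ∀ i, ‖v i‖ = 1)
    (hcode : ∀ i j : Fin T, i ≠ j →
      ⟪v i, v j⟫ ≤ ρ * Real.sinh ε * Real.sqrt (1 + Real.sqrt (Real.cosh α ^ 2 - 1) ^ 2) /
        (Real.sqrt (Real.cosh α ^ 2 - 1) * Real.sqrt (1 + Real.sinh ε ^ 2))) :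
    ∀ t : Fin T,
      let ε' : ℝ := Real.sinh ε
      let δ : ℝ := Real.sqrt (Real.cosh α ^ 2 - 1)
      let x1 : Fin (d + 1) → ℝ := Fin.cons (1 : ℝ) (0 : Fin d → ℝ)
      let x2 : Fin (d + 1) → ℝ := -x1
      let w : Fin T → Fin (d + 1) → ℝ :=
        fun i => Fin.cons ε' (fun k => Real.sqrt (1 + ε' ^ 2) * v i k)
      let xt1 : Fin T → Fin (d + 1) → ℝ :=
        fun i => Fin.cons (Real.sqrt (1 + δ ^ 2)) (fun k => δ * v i k)
      let xt2 : Fin T → Fin (d + 1) → ℝ := fun i => -(xt1 i)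
      mink (w t) (w t) = -1 ∧
      mink (w t) x1 = ε' ∧
      mink (w t) x2 = -ε' ∧
      Real.arsinh ((1 : ℝ) * mink (w t) x1 / Real.sqrt (-(mink (w t) (w t)))) = ε ∧
      Real.arsinh ((-1 : ℝ) * mink (w t) x2 / Real.sqrt (-(mink (w t) (w t)))) = ε ∧
      mink (xt1 t) (xt1 t) = 1 ∧
      mink (xt2 t) (xt2 t) = 1 ∧
      mink x1 (xt1 t) = Real.cosh α ∧
      mink x2 (xt2 t) = Real.cosh α ∧
      mink (w t) (xt1 t) < 0 ∧
      0 < mink (w t) (xt2 t) ∧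
      (∀ i : Fin T, i ≠ t → 0 < mink (w t) (xt1 i) ∧ mink (w t) (xt2 i) < 0) := by
  intro t ε' δ x1 x2 w xt1 xt2
  have hα : 0 < α := hε.trans hεα
  have hδ : δ = Real.sinh α := by
    show Real.sqrt (Real.cosh α ^ 2 - 1) = _
    rw [show Real.cosh α ^ 2 - 1 = Real.sinh α ^ 2 by rw [Real.cosh_sq]; ring,
      Real.sqrt_sq (Real.sinh_pos_iff.mpr hα).le]
  have hs1 : Real.sqrt (1 + ε' ^ 2) = Real.cosh ε := by
    show Real.sqrt (1 + Real.sinh ε ^ 2) = _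
    rw [show 1 + Real.sinh ε ^ 2 = Real.cosh ε ^ 2 by rw [Real.cosh_sq]; ring,
      Real.sqrt_sq (Real.cosh_pos _).le]
  have hs2 : Real.sqrt (1 + δ ^ 2) = Real.cosh α := by
    rw [hδ, show 1 + Real.sinh α ^ 2 = Real.cosh α ^ 2 by rw [Real.cosh_sq]; ring,
      Real.sqrt_sq (Real.cosh_pos _).le]
  have hsum : ∀ i, ∑ k, v i k * v i k = 1 := by
    intro i
    have h := real_inner_self_eq_norm_sq (v i)
    rw [hv i] at h
    simpa only [PiLp.inner_apply, RCLike.inner_apply, conj_trivial, one_pow] using h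
  have hinner : ∀ i j : Fin T, ⟪v i, v j⟫ = ∑ k, v i k * v j k := by
    intro i j; simp [PiLp.inner_apply, RCLike.inner_apply]
    exact Finset.sum_congr rfl fun k _ => mul_comm _ _
  -- basic mink computations
  have hww : mink (w t) (w t) = -1 := by
    show mink (Fin.cons _ _) (Fin.cons _ _) = -1
    rw [mink_cons]
    have : ∀ k, Real.sqrt (1 + ε' ^ 2) * v t k * (Real.sqrt (1 + ε' ^ 2) * v t k)
        = (1 + ε' ^ 2) * (v t k * v t k) := by
      intro k
      have h1 : Real.sqrt (1 + ε' ^ 2) * Real.sqrt (1 + ε' ^ 2) = 1 + ε' ^ 2 :=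
        Real.mul_self_sqrt (by positivity)
      calc Real.sqrt (1 + ε' ^ 2) * v t k * (Real.sqrt (1 + ε' ^ 2) * v t k)
          = Real.sqrt (1 + ε' ^ 2) * Real.sqrt (1 + ε' ^ 2) * (v t k * v t k) := by ring
        _ = (1 + ε' ^ 2) * (v t k * v t k) := by rw [h1]
    rw [Finset.sum_congr rfl (fun k _ => this k), ← Finset.mul_sum, hsum t]
    ring
  have hwx1 : mink (w t) x1 = ε' := by
    show mink (Fin.cons _ _) (Fin.cons _ _) = _
    rw [mink_cons]; simp
  have hwx2 : mink (w t) x2 = -ε' := by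
    show mink (w t) (-x1) = _
    rw [mink_neg_right, hwx1]
  have hx11 : mink (xt1 t) (xt1 t) = 1 := by
    show mink (Fin.cons _ _) (Fin.cons _ _) = 1
    rw [mink_cons]
    have h1 : Real.sqrt (1 + δ ^ 2) * Real.sqrt (1 + δ ^ 2) = 1 + δ ^ 2 :=
      Real.mul_self_sqrt (by positivity)
    have : ∀ k, δ * v t k * (δ * v t k) = δ ^ 2 * (v t k * v t k) := fun k => by ring
    rw [Finset.sum_congr rfl (fun k _ => this k), ← Finset.mul_sum, hsum t, h1]
    ring
  have hx1xt1 : mink x1 (xt1 t) = Real.cosh α := by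
    show mink (Fin.cons _ _) (Fin.cons _ _) = _
    rw [mink_cons]; simp [hs2]
  -- key quantity for (iv)/(v)
  have hwxt1 : ∀ i, mink (w t) (xt1 i)
      = ε' * Real.cosh α - Real.cosh ε * Real.sinh α * ⟪v t, v i⟫ := by
    intro i
    show mink (Fin.cons _ _) (Fin.cons _ _) = _
    rw [mink_cons, hs2, hs1, hinner, ← hδ, Finset.mul_sum]
    congr 1
    exact Finset.sum_congr rfl fun k _ => by ring
  have hpos : (0:ℝ) < Real.cosh ε * Real.sinh α :=
    mul_pos (Real.cosh_pos _) (Real.sinh_pos_iff.mpr hα)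
  refine ⟨hww, hwx1, hwx2, ?_, ?_, hx11, ?_, hx1xt1, ?_, ?_, ?_, ?_⟩
  · rw [hww, hwx1]; simp; exact Real.arsinh_sinh ε
  · rw [hww, hwx2]; simp; exact Real.arsinh_sinh ε
  · show mink (-(xt1 t)) (-(xt1 t)) = 1
    rw [mink_neg_left, mink_neg_right, hx11]; ring
  · show mink (-x1) (-(xt1 t)) = _
    rw [mink_neg_left, mink_neg_right, hx1xt1]; ring
  · -- w_t * xt1_t < 0
    rw [hwxt1 t]
    have hvt : ⟪v t, v t⟫ = 1 := by rw [hinner, hsum]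
    rw [hvt, mul_one]
    have : Real.sinh ε * Real.cosh α - Real.cosh ε * Real.sinh α = -Real.sinh (α - ε) := by
      rw [Real.sinh_sub]; ring
    show Real.sinh ε * Real.cosh α - Real.cosh ε * Real.sinh α < 0
    rw [this]
    have := Real.sinh_pos_iff.mpr (by linarith : (0:ℝ) < α - ε)
    linarith
  · -- 0 < w_t * xt2_t
    show 0 < mink (w t) (-(xt1 t))
    rw [mink_neg_right, hwxt1 t]
    have hvt : ⟪v t, v t⟫ = 1 := by rw [hinner, hsum]
    rw [hvt, mul_one]
    have := Real.sinh_pos_iff.mpr (by linarith : (0:ℝ) < α - ε)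
    rw [Real.sinh_sub] at this
    show (0:ℝ) < -(Real.sinh ε * Real.cosh α - Real.cosh ε * Real.sinh α)
    nlinarith
  · intro i hit
    have hcd : ⟪v t, v i⟫ ≤ ρ * Real.sinh ε * Real.cosh α / (Real.sinh α * Real.cosh ε) := by
      have h0 := hcode t i (by simpa using hit.symm)
      rw [show Real.sqrt (Real.cosh α ^ 2 - 1) = Real.sinh α from hδ,
        show Real.sqrt (1 + Real.sinh α ^ 2) = Real.cosh α from by
          rw [show 1 + Real.sinh α ^ 2 = Real.cosh α ^ 2 by rw [Real.cosh_sq]; ring,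
            Real.sqrt_sq (Real.cosh_pos _).le],
        show Real.sqrt (1 + Real.sinh ε ^ 2) = Real.cosh ε from hs1] at h0
      exact h0
    have hb : Real.cosh ε * Real.sinh α * ⟪v t, v i⟫
        ≤ ρ * (Real.sinh ε * Real.cosh α) := by
      have h2 : Real.cosh ε * Real.sinh α * ⟪v t, v i⟫
          ≤ Real.cosh ε * Real.sinh α *
            (ρ * Real.sinh ε * Real.cosh α / (Real.sinh α * Real.cosh ε)) :=
        mul_le_mul_of_nonneg_left hcd hpos.le
      calc Real.cosh ε * Real.sinh α * ⟪v t, v i⟫ ≤ _ := h2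
        _ = ρ * (Real.sinh ε * Real.cosh α) := by
          field_simp
    have hlt : ρ * (Real.sinh ε * Real.cosh α) < Real.sinh ε * Real.cosh α := by
      have hpos2 : 0 < Real.sinh ε * Real.cosh α :=
        mul_pos (Real.sinh_pos_iff.mpr hε) (Real.cosh_pos _)
      nlinarith [hρ.2, hρ.1]
    constructor
    · rw [hwxt1 i]
      show (0:ℝ) < Real.sinh ε * Real.cosh α - Real.cosh ε * Real.sinh α * ⟪v t, v i⟫
      linarith
    · show mink (w t) (-(xt1 i)) < 0
      rw [mink_neg_right, hwxt1 i]
      show -(Real.sinh ε * Real.cosh α - Real.cosh ε * Real.sinh α * ⟪v t, v i⟫) < 0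
      linarith
end
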